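/- Let N ≥ 1 be an integer, let ε ∈ (0,1], and let a_1, …, a_N be nonnegative real numbers. Then ∏_{n=1}^N (1 − ε^{a_n}) ≤ exp(−N · ε^{(1/N) Σ_{n=1}^N a_n}). -/

import Mathlib

/-- **Product-to-exponential bound for erasure probabilities.**
For `N ≥ 1`, `ε ∈ (0,1]`, and nonnegative reals `a 1, …, a N`:
`∏ (1 − ε^(a n)) ≤ exp(−N · ε^((1/N) Σ a n))` where `^` is the real power. -/
theorem stmt2 (N : ℕ) (hN : 1 ≤ N) (ε : ℝ) (hε0 : 0 < ε) (hε1 : ε ≤ 1)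
    (a : Fin N → ℝ) (ha : ∀ n, 0 ≤ a n) :
    ∏ n, (1 - ε ^ (a n))
      ≤ Real.exp (-(N : ℝ) * ε ^ ((1 / (N : ℝ)) * ∑ n, a n)) := by
  have hNpos : (0 : ℝ) < N := by exact_mod_cast hN
  -- Step 1: ∏ (1 - ε^(a n)) ≤ exp (- Σ ε^(a n))
  have h1 : ∀ n : Fin N, ε ^ (a n) ≤ 1 := fun n =>
    Real.rpow_le_one hε0.le hε1 (ha n)
  have step1 : ∏ n, (1 - ε ^ (a n)) ≤ Real.exp (-∑ n, ε ^ (a n)) := by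
    rw [← Finset.sum_neg_distrib, Real.exp_sum]
    apply Finset.prod_le_prod
    · intro n _; linarith [h1 n]
    · intro n _
      have := Real.add_one_le_exp (-(ε ^ (a n)))
      linarith
  refine step1.trans (Real.exp_le_exp.mpr ?_)
  rw [neg_le]; simp only [neg_mul, neg_neg]
  -- Step 2: N * ε^(avg) ≤ Σ ε^(a n), by convexity of t ↦ ε^t = exp (t * log ε)
  have hconv : ConvexOn ℝ Set.univ (fun t : ℝ => ε ^ t) := by
    have : (fun t : ℝ => ε ^ t) = fun t : ℝ => Real.exp (Real.log ε * t) := by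
      funext t
      rw [Real.rpow_def_of_pos hε0, mul_comm]
    rw [this]
    have := convexOn_exp.comp_affineMap
      ((Real.log ε • (LinearMap.id : ℝ →ₗ[ℝ] ℝ)).toAffineMap)
    simpa [Function.comp_def, Pi.smul_apply, smul_eq_mul] using this
  have key := hconv.map_sum_le (t := Finset.univ) (w := fun _ : Fin N => 1 / (N : ℝ))
    (p := a) (fun _ _ => by positivity)
    (by simp [Finset.sum_const, mul_comm]; field_simp)
    (fun _ _ => Set.mem_univ _)
  simp only [Finset.smul_sum, smul_eq_mul, ← Finset.mul_sum] at key
  calc (N : ℝ) * ε ^ ((1 / (N : ℝ)) * ∑ n, a n)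
      ≤ (N : ℝ) * ∑ n, (1 / (N : ℝ)) * ε ^ (a n) := by
        apply mul_le_mul_of_nonneg_left _ hNpos.le
        convert key using 2
        rw [Finset.mul_sum]
    _ = ∑ n, ε ^ (a n) := by
        rw [← Finset.mul_sum, ← mul_assoc, mul_one_div, div_self hNpos.ne', one_mul]
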